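/- Let d and r₂ be positive integers and k ∈ ℤ_{++}^{r₂} (with the convention k_{r₂+1} := 0). Then, in ℂ[X], the polynomial ∏_{1≤i<j≤r₂+1}(X − d(i+j−3)/4)_{k_i+k_j} divides the polynomial (X)_{φ₁(k),d} · ∏_{1≤i<j≤r₂}(X − d(i+j−2)/4)_{k_i+k_j}, where (X)_{φ₁(k),d} := ∏_{a=1}^{r₂}(X − d(a−1)/2)_{φ₁(k)_a}. Equivalently, the rational function (λ)_{φ₁(k),d} · C₁^{d,d/2}(λ,k) extends to a polynomial in λ. -/

import Mathlib

open Polynomial Finset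

/-- `(X - c)_m := ∏_{t=0}^{m-1} (X - c + t)` in `ℂ[X]`. -/
noncomputable def pochPoly (c : ℂ) (m : ℕ) : Polynomial ℂ :=
  ∏ t ∈ Finset.range m, (Polynomial.X - Polynomial.C c + (t : Polynomial ℂ))

/-- `φ₁(k)_a := min{k_i + k_j : 1 ≤ i < j ≤ r₂+1, i+j = 2a+1}`. -/
noncomputable def phi1 (r₂ : ℕ) (k : ℕ → ℕ) (a : ℕ) : ℕ :=
  sInf {m : ℕ | ∃ i j : ℕ, 1 ≤ i ∧ i < j ∧ j ≤ r₂ + 1 ∧ i + j = 2 * a + 1 ∧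
    m = k i + k j}

/-- The denominator `∏_{1≤i<j≤r₂+1}(X − d(i+j−3)/4)_{k_i+k_j}` of `C₁^{d,d/2}`. -/
noncomputable def denom1 (d r₂ : ℕ) (k : ℕ → ℕ) : Polynomial ℂ :=
  ∏ i ∈ Finset.Icc 1 (r₂ + 1), ∏ j ∈ Finset.Icc (i + 1) (r₂ + 1),
    pochPoly ((d : ℂ) * ((i : ℂ) + (j : ℂ) - 3) / 4) (k i + k j)

/-- The numerator `∏_{1≤i<j≤r₂}(X − d(i+j−2)/4)_{k_i+k_j}` of `C₁^{d,d/2}`. -/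
noncomputable def numer1 (d r₂ : ℕ) (k : ℕ → ℕ) : Polynomial ℂ :=
  ∏ i ∈ Finset.Icc 1 r₂, ∏ j ∈ Finset.Icc (i + 1) r₂,
    pochPoly ((d : ℂ) * ((i : ℂ) + (j : ℂ) - 2) / 4) (k i + k j)

/-- The polynomial `(X)_{φ₁(k),d} = ∏_{a=1}^{r₂}(X − d(a−1)/2)_{φ₁(k)_a}`. -/
noncomputable def phiPoly1 (d r₂ : ℕ) (k : ℕ → ℕ) : Polynomial ℂ :=
  ∏ a ∈ Finset.Icc 1 r₂,
    pochPoly ((d : ℂ) * ((a : ℂ) - 1) / 2) (phi1 r₂ k a)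

/- ## Auxiliary material -/

lemma pochPoly_dvd_pochPoly (c : ℂ) {m n : ℕ} (h : m ≤ n) :
    pochPoly c m ∣ pochPoly c n :=
  Finset.prod_dvd_prod_of_subset _ _ _ (Finset.range_subset_range.2 h)

lemma prod_dvd_prod_map {α β M : Type*} [CommMonoid M] [DecidableEq β]
    (s : Finset α) (t : Finset β) (f : α → M) (h : β → M) (g : α → β)
    (hinj : Set.InjOn g s) (hmem : ∀ x ∈ s, g x ∈ t)
    (hdvd : ∀ x ∈ s, f x ∣ h (g x)) :
    (∏ x ∈ s, f x) ∣ ∏ y ∈ t, h y := by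
  calc (∏ x ∈ s, f x) ∣ ∏ x ∈ s, h (g x) := Finset.prod_dvd_prod_of_dvd _ _ hdvd
    _ = ∏ y ∈ s.image g, h y :=
        (Finset.prod_image fun a ha b hb hab => hinj ha hb hab).symm
    _ ∣ ∏ y ∈ t, h y :=
        Finset.prod_dvd_prod_of_subset _ _ _ (Finset.image_subset_iff.2 hmem)

/-- `phi1` is attained by some admissible pair. -/
lemma phi1_attained (r₂ : ℕ) (k : ℕ → ℕ) (a : ℕ) (ha1 : 1 ≤ a) (ha2 : a ≤ r₂) :
    ∃ i j : ℕ, 1 ≤ i ∧ i < j ∧ j ≤ r₂ + 1 ∧ i + j = 2 * a + 1 ∧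
      phi1 r₂ k a = k i + k j := by
  have hne : {m : ℕ | ∃ i j : ℕ, 1 ≤ i ∧ i < j ∧ j ≤ r₂ + 1 ∧ i + j = 2 * a + 1 ∧
      m = k i + k j}.Nonempty :=
    ⟨k a + k (a + 1), a, a + 1, by omega, by omega, by omega, by omega, rfl⟩
  exact Nat.sInf_mem hne

/-- The smallest first index of a minimizing pair for `phi1`. -/
noncomputable def istar (r₂ : ℕ) (k : ℕ → ℕ) (a : ℕ) : ℕ :=
  sInf {i : ℕ | ∃ j : ℕ, 1 ≤ i ∧ i < j ∧ j ≤ r₂ + 1 ∧ i + j = 2 * a + 1 ∧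
    k i + k j = phi1 r₂ k a}

lemma istar_spec (r₂ : ℕ) (k : ℕ → ℕ) (a : ℕ) (ha1 : 1 ≤ a) (ha2 : a ≤ r₂) :
    ∃ j : ℕ, 1 ≤ istar r₂ k a ∧ istar r₂ k a < j ∧ j ≤ r₂ + 1 ∧
      istar r₂ k a + j = 2 * a + 1 ∧ k (istar r₂ k a) + k j = phi1 r₂ k a := by
  obtain ⟨i, j, h1, h2, h3, h4, h5⟩ := phi1_attained r₂ k a ha1 ha2
  have hne : {i : ℕ | ∃ j : ℕ, 1 ≤ i ∧ i < j ∧ j ≤ r₂ + 1 ∧ i + j = 2 * a + 1 ∧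
      k i + k j = phi1 r₂ k a}.Nonempty := ⟨i, j, h1, h2, h3, h4, h5.symm⟩
  exact Nat.sInf_mem hne

/-- The matching from denominator factors to (phi-part ⊕ numerator) factors. -/
noncomputable def gmap (r₂ : ℕ) (k : ℕ → ℕ) (x : Σ _ : ℕ, ℕ) : ℕ ⊕ (Σ _ : ℕ, ℕ) :=
  if (x.1 + x.2) % 2 = 0 then Sum.inr ⟨x.1, x.2 - 1⟩
  else if x.1 = istar r₂ k ((x.1 + x.2) / 2) then Sum.inl ((x.1 + x.2) / 2)
  else if x.1 < istar r₂ k ((x.1 + x.2) / 2) then Sum.inr ⟨x.1, x.2 - 1⟩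
  else Sum.inr ⟨x.1 - 1, x.2⟩

/-- Theorem 6.2 (case ε₂ = 1, d₂ = d/2, restricted): `(λ)_{φ₁(k),d}·C₁^{d,d/2}(λ,k)`
is a polynomial in `λ`. -/
theorem denom_dvd_phiPoly_mul_numer_simple₁ (d r₂ : ℕ) (hd : 0 < d) (hr₂ : 0 < r₂)
    (k : ℕ → ℕ) (hk : ∀ i j, 1 ≤ i → i ≤ j → j ≤ r₂ → k j ≤ k i)
    (hk0 : k (r₂ + 1) = 0) :
    denom1 d r₂ k ∣ phiPoly1 d r₂ k * numer1 d r₂ k := by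
  classical
  -- extended monotonicity
  have hk' : ∀ i j, 1 ≤ i → i ≤ j → j ≤ r₂ + 1 → k j ≤ k i := by
    intro i j h1 h2 h3
    rcases Nat.lt_or_ge j (r₂ + 1) with h | h
    · exact hk i j h1 h2 (by omega)
    · have hj : j = r₂ + 1 := by omega
      rcases Nat.lt_or_ge i (r₂ + 1) with h' | h'
      · rw [hj, hk0]; omega
      · have : i = j := by omega
        rw [this]
  have hD : denom1 d r₂ k =
      ∏ x ∈ (Finset.Icc 1 (r₂ + 1)).sigma (fun i => Finset.Icc (i + 1) (r₂ + 1)),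
        pochPoly ((d : ℂ) * ((x.1 : ℂ) + (x.2 : ℂ) - 3) / 4) (k x.1 + k x.2) := by
    rw [denom1, Finset.prod_sigma]
  have hRHS : phiPoly1 d r₂ k * numer1 d r₂ k =
      ∏ y ∈ (Finset.Icc 1 r₂).disjSum
          ((Finset.Icc 1 r₂).sigma (fun i => Finset.Icc (i + 1) r₂)),
        Sum.elim
          (fun a : ℕ => pochPoly ((d : ℂ) * ((a : ℂ) - 1) / 2) (phi1 r₂ k a))
          (fun x : Σ _ : ℕ, ℕ =>
            pochPoly ((d : ℂ) * ((x.1 : ℂ) + (x.2 : ℂ) - 2) / 4) (k x.1 + k x.2)) y := by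
    rw [Finset.prod_disjSum, phiPoly1, numer1, Finset.prod_sigma]
    simp only [Sum.elim_inl, Sum.elim_inr]
  rw [hD, hRHS]
  refine prod_dvd_prod_map _ _ _ _ (gmap r₂ k) ?_ ?_ ?_
  · -- injectivity
    rintro ⟨i₁, j₁⟩ hx ⟨i₂, j₂⟩ hy hg
    rw [Finset.mem_coe, Finset.mem_sigma, Finset.mem_Icc, Finset.mem_Icc] at hx hy
    dsimp only at hx hy
    obtain ⟨⟨hi1, hi2⟩, hj1, hj2⟩ := hx
    obtain ⟨⟨hi1', hi2'⟩, hj1', hj2'⟩ := hy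
    simp only [gmap] at hg
    have hsame : (i₁ + j₁) / 2 = (i₂ + j₂) / 2 → istar r₂ k ((i₁ + j₁) / 2) =
        istar r₂ k ((i₂ + j₂) / 2) := fun h => by rw [h]
    split_ifs at hg <;>
      simp only [Sum.inl.injEq, Sum.inr.injEq, Sigma.mk.inj_iff, heq_eq_eq,
        reduceCtorEq] at hg <;>
      simp only [Sigma.mk.inj_iff, heq_eq_eq] <;>
      first
      | omega
      | (have := hsame (by omega); omega)
  · -- membership
    rintro ⟨i, j⟩ hx
    rw [Finset.mem_sigma, Finset.mem_Icc, Finset.mem_Icc] at hx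
    dsimp only at hx
    obtain ⟨⟨hi1, hi2⟩, hj1, hj2⟩ := hx
    simp only [gmap]
    split_ifs with hpar heq hlt
    · rw [Finset.inr_mem_disjSum, Finset.mem_sigma, Finset.mem_Icc, Finset.mem_Icc]
      dsimp only
      omega
    · rw [Finset.inl_mem_disjSum, Finset.mem_Icc]
      omega
    · obtain ⟨j', s1, s2, s3, s4, s5⟩ :=
        istar_spec r₂ k ((i + j) / 2) (by omega) (by omega)
      rw [Finset.inr_mem_disjSum, Finset.mem_sigma, Finset.mem_Icc, Finset.mem_Icc]
      dsimp only
      omega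
    · obtain ⟨j', s1, s2, s3, s4, s5⟩ :=
        istar_spec r₂ k ((i + j) / 2) (by omega) (by omega)
      rw [Finset.inr_mem_disjSum, Finset.mem_sigma, Finset.mem_Icc, Finset.mem_Icc]
      dsimp only
      omega
  · -- divisibility factor by factor
    rintro ⟨i, j⟩ hx
    rw [Finset.mem_sigma, Finset.mem_Icc, Finset.mem_Icc] at hx
    dsimp only at hx
    obtain ⟨⟨hi1, hi2⟩, hj1, hj2⟩ := hx
    simp only [gmap]
    split_ifs with hpar heq hlt
    · -- even:  ⟨i, j⟩ ↦ ⟨i, j-1⟩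
      simp only [Sum.elim_inr]
      have hc : (d : ℂ) * ((i : ℂ) + ((j - 1 : ℕ) : ℂ) - 2) / 4 =
          (d : ℂ) * ((i : ℂ) + (j : ℂ) - 3) / 4 := by
        rw [Nat.cast_sub (by omega : 1 ≤ j)]; push_cast; ring
      rw [hc]
      exact pochPoly_dvd_pochPoly _
        (Nat.add_le_add_left (hk' (j - 1) j (by omega) (by omega) (by omega)) _)
    · -- minimizing pair ↦ phi factor
      simp only [Sum.elim_inl]
      obtain ⟨j', s1, s2, s3, s4, s5⟩ :=
        istar_spec r₂ k ((i + j) / 2) (by omega) (by omega)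
      have hj' : j' = j := by omega
      rw [← heq, hj'] at s5
      rw [← s5]
      have hc : (d : ℂ) * ((((i + j) / 2 : ℕ) : ℂ) - 1) / 2 =
          (d : ℂ) * ((i : ℂ) + (j : ℂ) - 3) / 4 := by
        have hsum : (i : ℂ) + (j : ℂ) = 2 * (((i + j) / 2 : ℕ) : ℂ) + 1 := by
          have : i + j = 2 * ((i + j) / 2) + 1 := by omega
          exact_mod_cast congrArg (Nat.cast : ℕ → ℂ) this
        linear_combination (-(d : ℂ) / 4) * hsum
      rw [hc]
    · -- i < istar:  ⟨i, j⟩ ↦ ⟨i, j-1⟩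
      simp only [Sum.elim_inr]
      have hc : (d : ℂ) * ((i : ℂ) + ((j - 1 : ℕ) : ℂ) - 2) / 4 =
          (d : ℂ) * ((i : ℂ) + (j : ℂ) - 3) / 4 := by
        rw [Nat.cast_sub (by omega : 1 ≤ j)]; push_cast; ring
      rw [hc]
      exact pochPoly_dvd_pochPoly _
        (Nat.add_le_add_left (hk' (j - 1) j (by omega) (by omega) (by omega)) _)
    · -- i > istar:  ⟨i, j⟩ ↦ ⟨i-1, j⟩
      simp only [Sum.elim_inr]
      obtain ⟨j', s1, s2, s3, s4, s5⟩ :=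
        istar_spec r₂ k ((i + j) / 2) (by omega) (by omega)
      have hc : (d : ℂ) * (((i - 1 : ℕ) : ℂ) + (j : ℂ) - 2) / 4 =
          (d : ℂ) * ((i : ℂ) + (j : ℂ) - 3) / 4 := by
        rw [Nat.cast_sub (by omega : 1 ≤ i)]; push_cast; ring
      rw [hc]
      exact pochPoly_dvd_pochPoly _
        (Nat.add_le_add_right (hk' (i - 1) i (by omega) (by omega) (by omega)) _)
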